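/- For any classifier h : 𝒳 → Bool and any predicate φ on a finite type 𝒳 with at least one point satisfying φ not in the image constraint, the influence ι is (ε, γ/2)-unconstrained: there exist h₁, h₂ agreeing with h on the event ¬φ(X) up to probability ε such that ι(h₁) ≥ γ/2 and ι(h₂) ≤ 1 - γ/2, given P(φ(X)) ≤ ε and P(φ(X_cf) ∧ ¬φ(X)) = γ. -/
import Mathlib


open Finset

noncomputable def Pr {Ω : Type*} [Fintype Ω] (p : Ω → ℝ) (E : Ω → Prop) [DecidablePred E] : ℝ :=
  ∑ ω, if E ω then p ω else 0

lemma Pr_mono {Ω : Type*} [Fintype Ω] (p : Ω → ℝ) (hp : ∀ ω, 0 ≤ p ω)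
    {E F : Ω → Prop} [DecidablePred E] [DecidablePred F]
    (hEF : ∀ ω, E ω → F ω) : Pr p E ≤ Pr p F := by
  apply Finset.sum_le_sum
  intro ω _
  by_cases hE : E ω
  · simp [hE, hEF ω hE]
  · simp only [hE, if_false]
    split <;> simp [hp ω]

lemma Pr_compl {Ω : Type*} [Fintype Ω] (p : Ω → ℝ) (hsum : ∑ ω, p ω = 1)
    (E : Ω → Prop) [DecidablePred E] :
    Pr p E + Pr p (fun ω => ¬ E ω) = 1 := by
  rw [← hsum, Pr, Pr, ← Finset.sum_add_distrib]
  apply Finset.sum_congr rfl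
  intro ω _
  by_cases hE : E ω <;> simp [hE]

lemma Pr_split {Ω : Type*} [Fintype Ω] (p : Ω → ℝ)
    (A : Ω → Prop) [DecidablePred A] (b : Ω → Bool) :
    Pr p (fun ω => A ω ∧ b ω = true) + Pr p (fun ω => A ω ∧ b ω = false) = Pr p A := by
  rw [Pr, Pr, Pr, ← Finset.sum_add_distrib]
  apply Finset.sum_congr rfl
  intro ω _
  by_cases hA : A ω <;> cases hb : b ω <;> simp [hA, hb]

/-- Theorem 1 (full): given `P(φ(X)) ≤ ε` and `P(φ(X_cf) ∧ ¬φ(X)) = γ`, the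
influence measure is `(ε, γ/2)`-unconstrained for any classifier `h`: there are
`h₁, h₂` each within `ε` of `h` on the data distribution with `ι(h₁) ≥ γ/2`
and `ι(h₂) ≤ 1 - γ/2`. -/
theorem influence_unconstrained {Ω 𝒳 : Type*} [Fintype Ω] [Fintype 𝒳] [DecidableEq 𝒳]
    (p : Ω → ℝ) (hp : ∀ ω, 0 ≤ p ω) (hsum : ∑ ω, p ω = 1)
    (X Xcf : Ω → 𝒳) (φ : 𝒳 → Prop) [DecidablePred φ] (ε γ : ℝ)
    (hε : Pr p (fun ω => φ (X ω)) ≤ ε)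
    (hγ : Pr p (fun ω => φ (Xcf ω) ∧ ¬φ (X ω)) = γ)
    (h : 𝒳 → Bool) :
    ∃ h₁ h₂ : 𝒳 → Bool,
      Pr p (fun ω => h (X ω) ≠ h₁ (X ω)) ≤ ε ∧
      Pr p (fun ω => h (X ω) ≠ h₂ (X ω)) ≤ ε ∧
      γ / 2 ≤ Pr p (fun ω => h₁ (X ω) ≠ h₁ (Xcf ω)) ∧
      Pr p (fun ω => h₂ (X ω) ≠ h₂ (Xcf ω)) ≤ 1 - γ / 2 := by
  classical
  set A : Ω → Prop := fun ω => φ (Xcf ω) ∧ ¬φ (X ω) with hA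
  have hsplit := Pr_split p A (fun ω => h (X ω))
  rw [hγ] at hsplit
  -- choose b with Pr (A ∧ h(X) = b) ≥ γ/2
  obtain ⟨b, hb⟩ : ∃ b : Bool, γ / 2 ≤ Pr p (fun ω => A ω ∧ h (X ω) = b) := by
    by_cases hcase : γ / 2 ≤ Pr p (fun ω => A ω ∧ h (X ω) = true)
    · exact ⟨true, hcase⟩
    · exact ⟨false, by linarith⟩
  set g : Bool → 𝒳 → Bool := fun c x => if φ x then c else h x with hg
  have hclose : ∀ c, Pr p (fun ω => h (X ω) ≠ g c (X ω)) ≤ ε := by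
    intro c
    refine le_trans (Pr_mono p hp ?_) hε
    intro ω hω
    by_contra hφ
    exact hω (by simp [hg, hφ])
  refine ⟨g (!b), g b, hclose _, hclose _, ?_, ?_⟩
  · refine le_trans hb (Pr_mono p hp ?_)
    intro ω ⟨⟨hcf, hx⟩, hhb⟩
    simp [hg, hx, hcf, hhb]
  · have hcompl := Pr_compl p hsum (fun ω => g b (X ω) ≠ g b (Xcf ω))
    have hge : γ / 2 ≤ Pr p (fun ω => ¬ (g b (X ω) ≠ g b (Xcf ω))) := by
      refine le_trans hb (Pr_mono p hp ?_)
      intro ω ⟨⟨hcf, hx⟩, hhb⟩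
      simp [hg, hx, hcf, hhb]
    linarith
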